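/- For a standard Gaussian random variable Z ~ N(0,1) and any a ∈ ℝ, any λ ≥ 0: 1 + E[(Z + a)² ∧ λ²] − 2 P(|Z + a| ≤ λ) ≤ (1 + λ²)(e^{−λ²/2} + a²). -/

import Mathlib

open MeasureTheory ProbabilityTheory Real Set
open scoped NNReal ENNReal

noncomputable def gphi (x : ℝ) : ℝ := (Real.sqrt (2 * π))⁻¹ * Real.exp (-x ^ 2 / 2)

lemma gphi_eq_pdf : gaussianPDFReal 0 1 = gphi := by
  ext x
  simp [gaussianPDFReal, gphi]

lemma gphi_nonneg (x : ℝ) : 0 ≤ gphi x :=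
  mul_nonneg (inv_nonneg.mpr (Real.sqrt_nonneg _)) (Real.exp_pos _).le

lemma gphi_even (x : ℝ) : gphi (-x) = gphi x := by simp [gphi]

lemma continuous_gphi : Continuous gphi := by
  unfold gphi; fun_prop

lemma integrable_gphi : Integrable gphi := by
  rw [← gphi_eq_pdf]; exact integrable_gaussianPDFReal 0 1

lemma integral_gphi : ∫ x, gphi x = 1 := by
  rw [← gphi_eq_pdf]; exact integral_gaussianPDFReal_eq_one 0 one_ne_zero

lemma hasDerivAt_gphi (x : ℝ) : HasDerivAt gphi (-x * gphi x) x := by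
  have h : HasDerivAt (fun y : ℝ => -y ^ 2 / 2) (-x) x := by
    have := ((hasDerivAt_pow 2 x).neg).div_const 2
    refine this.congr_deriv ?_
    simp; ring
  have h2 := (h.exp).const_mul (Real.sqrt (2 * π))⁻¹
  refine h2.congr_deriv ?_
  unfold gphi; ring

noncomputable def gG (x : ℝ) : ℝ := ∫ t in (0:ℝ)..x, gphi t

lemma hasDerivAt_gG (x : ℝ) : HasDerivAt gG (gphi x) x := by
  refine intervalIntegral.integral_hasDerivAt_right
    integrable_gphi.intervalIntegrable
    (continuous_gphi.stronglyMeasurableAtFilter _ _)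
    continuous_gphi.continuousAt

lemma gG_neg (x : ℝ) : gG (-x) = -gG x := by
  have : gG (-x) = ∫ t in (0:ℝ)..(-x), gphi (-t) := by
    unfold gG; congr 1; ext t; rw [gphi_even]
  rw [this, intervalIntegral.integral_comp_neg, neg_zero, neg_neg,
    intervalIntegral.integral_symm]
  rfl

-- interval integral vs Icc set integral
lemma gG_le : ∀ x : ℝ, gG x ≤ 1 := by
  intro x
  rcases le_or_gt x 0 with h | h
  · have : gG x ≤ 0 := by
      rw [gG, intervalIntegral.integral_symm, ← neg_nonneg, neg_neg]
      exact intervalIntegral.integral_nonneg h (fun t _ => gphi_nonneg t)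
    linarith
  · calc gG x = ∫ t in Ioc (0:ℝ) x, gphi t := by
          rw [gG, intervalIntegral.integral_of_le h.le]
    _ ≤ ∫ t, gphi t := setIntegral_le_integral integrable_gphi
          (ae_of_all _ (fun t => gphi_nonneg t))
    _ = 1 := integral_gphi

noncomputable def gQ (x : ℝ) : ℝ := ∫ t in Ioi x, gphi t

lemma gQ_nonneg (x : ℝ) : 0 ≤ gQ x :=
  setIntegral_nonneg measurableSet_Ioi (fun t _ => gphi_nonneg t)

lemma gQ_zero : gQ 0 = 1 / 2 := by
  have h1 : ∫ t in Iic (0:ℝ), gphi t = gQ 0 := by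
    calc ∫ t in Iic (0:ℝ), gphi t = ∫ t in Iic (0:ℝ), gphi (-t) := by
          congr 1; ext t; rw [gphi_even]
      _ = ∫ t in Ioi (-(0:ℝ)), gphi t := integral_comp_neg_Iic 0 gphi
      _ = gQ 0 := by norm_num [gQ]
  have h2 : (∫ t in Iic (0:ℝ), gphi t) + gQ 0 = 1 := by
    unfold gQ
    rw [← integral_gphi, ← setIntegral_union (Iic_disjoint_Ioi le_rfl) measurableSet_Ioi
      integrable_gphi.integrableOn integrable_gphi.integrableOn, Iic_union_Ioi,
      setIntegral_univ]
  linarith [h1, h2]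

lemma gG_sub (c d : ℝ) : gG d - gG c = ∫ t in c..d, gphi t := by
  have := intervalIntegral.integral_add_adjacent_intervals
    (a := (0:ℝ)) (b := c) (c := d) (μ := volume) (f := gphi)
    integrable_gphi.intervalIntegrable integrable_gphi.intervalIntegrable
  unfold gG
  linarith [this]

lemma gG_split (l : ℝ) (hl : 0 ≤ l) : 1 - 2 * gG l = 2 * gQ l := by
  have hsplit : gG l + gQ l = gQ 0 := by
    unfold gQ
    rw [gG, intervalIntegral.integral_of_le hl,
      ← setIntegral_union (Ioc_disjoint_Ioi le_rfl) measurableSet_Ioi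
        integrable_gphi.integrableOn integrable_gphi.integrableOn,
      Ioc_union_Ioi_eq_Ioi hl]
  rw [gQ_zero] at hsplit
  linarith

lemma gQ_shift (l : ℝ) : ∫ t in Ioi l, gphi (t - l) = gQ 0 := by
  have hemb : MeasurableEmbedding (fun x : ℝ => x + l) :=
    (Homeomorph.addRight l).measurableEmbedding
  have hmap : Measure.map (fun x : ℝ => x + l) (volume : Measure ℝ) = volume :=
    map_add_right_eq_self volume l
  have h := hemb.setIntegral_map (μ := volume) (fun t => gphi (t - l)) (Ioi l)
  rw [hmap] at h
  rw [h]
  have hpre : (fun x : ℝ => x + l) ⁻¹' Ioi l = Ioi 0 := by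
    ext x; simp [lt_add_iff_pos_left]
  rw [hpre]
  simp [gQ]

lemma gQ_le (l : ℝ) (hl : 0 ≤ l) : gQ l ≤ Real.exp (-l ^ 2 / 2) / 2 := by
  have hint : IntegrableOn (fun t => Real.exp (-l ^ 2 / 2) * gphi (t - l)) (Ioi l) :=
    ((integrable_gphi.comp_sub_right l).const_mul _).integrableOn
  have hle : gQ l ≤ ∫ t in Ioi l, Real.exp (-l ^ 2 / 2) * gphi (t - l) := by
    refine setIntegral_mono_on integrable_gphi.integrableOn hint measurableSet_Ioi ?_
    intro t ht
    have ht' : l ≤ t := le_of_lt ht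
    unfold gphi
    have h2 : -t ^ 2 / 2 ≤ -l ^ 2 / 2 + -(t - l) ^ 2 / 2 := by nlinarith
    have hrw : Real.exp (-l ^ 2 / 2) * ((Real.sqrt (2 * π))⁻¹ * Real.exp (-(t - l) ^ 2 / 2))
        = (Real.sqrt (2 * π))⁻¹ * Real.exp (-l ^ 2 / 2 + -(t - l) ^ 2 / 2) := by
      rw [Real.exp_add]; ring
    rw [hrw]
    exact mul_le_mul_of_nonneg_left (Real.exp_le_exp.mpr h2)
      (inv_nonneg.mpr (Real.sqrt_nonneg _))
  rw [integral_const_mul, gQ_shift, gQ_zero] at hle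
  linarith

lemma integral_gaussianReal_eq (g : ℝ → ℝ) :
    ∫ z, g z ∂(gaussianReal 0 1) = ∫ z, gphi z * g z := by
  rw [gaussianReal_of_var_ne_zero 0 one_ne_zero]
  have h : gaussianPDF 0 1 = fun x => ((Real.toNNReal (gaussianPDFReal 0 1 x) : ℝ≥0) : ℝ≥0∞) :=
    rfl
  rw [h, integral_withDensity_eq_integral_smul (measurable_gaussianPDFReal 0 1).real_toNNReal g]
  congr 1
  ext x
  rw [NNReal.smul_def, Real.coe_toNNReal _ (gaussianPDFReal_nonneg 0 1 x), gphi_eq_pdf,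
    smul_eq_mul]

lemma gaussianReal_prob_eq (s : Set ℝ) :
    ((gaussianReal 0 1) s).toReal = ∫ z in s, gphi z := by
  rw [gaussianReal_apply_eq_integral 0 one_ne_zero s, ENNReal.toReal_ofReal, gphi_eq_pdf]
  rw [gphi_eq_pdf]
  exact setIntegral_nonneg_of_ae (ae_of_all _ (fun t => gphi_nonneg t))




lemma min_integral_eq (a l : ℝ) (hl : 0 ≤ l) :
    ∫ z, gphi z * min ((z + a) ^ 2) (l ^ 2)
      = l ^ 2 - ∫ z in Icc (-l - a) (l - a), gphi z * (l ^ 2 - (z + a) ^ 2) := by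
  have hfun : (fun z => gphi z * min ((z + a) ^ 2) (l ^ 2))
      = fun z => gphi z * l ^ 2
        - (Icc (-l - a) (l - a)).indicator (fun z => gphi z * (l ^ 2 - (z + a) ^ 2)) z := by
    funext z
    by_cases hz : z ∈ Icc (-l - a) (l - a)
    · rw [indicator_of_mem hz]
      have h1 := hz.1
      have h2 := hz.2
      have h3 : (z + a) ^ 2 ≤ l ^ 2 := by nlinarith
      rw [min_eq_left h3]; ring
    · rw [indicator_of_notMem hz]
      have h3 : l ^ 2 ≤ (z + a) ^ 2 := by
        rw [mem_Icc, not_and_or, not_le, not_le] at hz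
        rcases hz with h | h <;> nlinarith [hl]
      rw [min_eq_right h3]; ring
  have hc : Continuous (fun z : ℝ => gphi z * (l ^ 2 - (z + a) ^ 2)) :=
    continuous_gphi.mul (by continuity)
  have hInt2 : Integrable
      ((Icc (-l - a) (l - a)).indicator (fun z => gphi z * (l ^ 2 - (z + a) ^ 2))) :=
    (hc.integrableOn_Icc).integrable_indicator measurableSet_Icc
  rw [hfun, integral_sub (integrable_gphi.mul_const _) hInt2]
  rw [integral_indicator measurableSet_Icc, integral_mul_const, integral_gphi, one_mul]

lemma interval_int (a l c d : ℝ) :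
    ∫ z in c..d, (l ^ 2 + 2 - (z + a) ^ 2) * gphi z
      = ((l ^ 2 + 1 - a ^ 2) * gG d + (d + 2 * a) * gphi d)
        - ((l ^ 2 + 1 - a ^ 2) * gG c + (c + 2 * a) * gphi c) := by
  refine intervalIntegral.integral_eq_sub_of_hasDerivAt
    (f := fun z => (l ^ 2 + 1 - a ^ 2) * gG z + (z + 2 * a) * gphi z) (fun x _ => ?_) ?_
  · have h1 := (hasDerivAt_gG x).const_mul (l ^ 2 + 1 - a ^ 2)
    have h2 := ((hasDerivAt_id x).add_const (2 * a)).mul (hasDerivAt_gphi x)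
    refine (h1.add h2).congr_deriv ?_
    simp only [id_eq, one_mul]
    ring
  · exact Continuous.intervalIntegrable ((by continuity : Continuous fun z : ℝ => l ^ 2 + 2 - (z + a) ^ 2).mul continuous_gphi) c d

noncomputable def Fdj (l a : ℝ) : ℝ :=
  (1 + l ^ 2 - a ^ 2) * (1 - (gG (l - a) - gG (-l - a)))
    - (l - a) * gphi (l + a) - (l + a) * gphi (l - a)

lemma combined (a l : ℝ) (hl : 0 ≤ l) :
    1 + (∫ z, gphi z * min ((z + a) ^ 2) (l ^ 2))
      - 2 * ∫ z in Icc (-l - a) (l - a), gphi z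
      = a ^ 2 + Fdj l a := by
  rw [min_integral_eq a l hl]
  have hcd : -l - a ≤ l - a := by linarith
  have hA : ∫ z in Icc (-l - a) (l - a), gphi z * (l ^ 2 - (z + a) ^ 2)
      = ∫ z in (-l - a)..(l - a), gphi z * (l ^ 2 - (z + a) ^ 2) := by
    rw [intervalIntegral.integral_of_le hcd, integral_Icc_eq_integral_Ioc]
  have hB : ∫ z in Icc (-l - a) (l - a), gphi z
      = ∫ z in (-l - a)..(l - a), gphi z := by
    rw [intervalIntegral.integral_of_le hcd, integral_Icc_eq_integral_Ioc]
  rw [hA, hB]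
  have hsum : (∫ z in (-l - a)..(l - a), (l ^ 2 + 2 - (z + a) ^ 2) * gphi z)
      = (∫ z in (-l - a)..(l - a), gphi z * (l ^ 2 - (z + a) ^ 2))
        + 2 * ∫ z in (-l - a)..(l - a), gphi z := by
    rw [← intervalIntegral.integral_const_mul, ← intervalIntegral.integral_add (f := fun z => gphi z * (l ^ 2 - (z + a) ^ 2)) (g := fun z => 2 * gphi z)
      (Continuous.intervalIntegrable (continuous_gphi.mul (by continuity)) _ _)
      (Continuous.intervalIntegrable (continuous_const.mul continuous_gphi) _ _)]
    congr 1; funext z; ring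
  have hII := interval_int a l (-l - a) (l - a)
  have heven : gphi (-l - a) = gphi (l + a) := by
    rw [show (-l - a : ℝ) = -(l + a) by ring, gphi_even]
  unfold Fdj
  linear_combination hsum - hII - (l - a) * heven

lemma intervalIntegral_gphi_le_one (c d : ℝ) (h : c ≤ d) : ∫ t in c..d, gphi t ≤ 1 := by
  rw [intervalIntegral.integral_of_le h]
  exact le_trans (setIntegral_le_integral integrable_gphi (ae_of_all _ (fun t => gphi_nonneg t)))
    (le_of_eq integral_gphi)

lemma hasDerivAt_Fdj (l x : ℝ) :
    HasDerivAt (Fdj l) (-2 * x * (1 - (gG (l - x) - gG (-l - x)))) x := by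
  have hla : HasDerivAt (fun y : ℝ => l - y) (-1) x := (hasDerivAt_id x).const_sub l
  have hnla : HasDerivAt (fun y : ℝ => -l - y) (-1) x := (hasDerivAt_id x).const_sub (-l)
  have hpla : HasDerivAt (fun y : ℝ => l + y) 1 x := by
    simpa using (hasDerivAt_id x).const_add l
  have hG1 : HasDerivAt (fun y : ℝ => gG (l - y)) (gphi (l - x) * (-1)) x :=
    (hasDerivAt_gG (l - x)).comp x hla
  have hG2 : HasDerivAt (fun y : ℝ => gG (-l - y)) (gphi (-l - x) * (-1)) x :=
    (hasDerivAt_gG (-l - x)).comp x hnla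
  have hphi1 : HasDerivAt (fun y : ℝ => gphi (l + y)) ((-(l + x) * gphi (l + x)) * 1) x :=
    (hasDerivAt_gphi (l + x)).comp x hpla
  have hphi2 : HasDerivAt (fun y : ℝ => gphi (l - y)) ((-(l - x) * gphi (l - x)) * (-1)) x :=
    (hasDerivAt_gphi (l - x)).comp x hla
  have hA : HasDerivAt (fun y : ℝ => 1 + l ^ 2 - y ^ 2) (-(2 * x)) x := by
    simpa using (hasDerivAt_pow 2 x).const_sub (1 + l ^ 2)
  have hB : HasDerivAt (fun y : ℝ => 1 - (gG (l - y) - gG (-l - y)))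
      (-(gphi (l - x) * (-1) - gphi (-l - x) * (-1))) x := (hG1.sub hG2).const_sub 1
  have hC := hA.mul hB
  have hD1 := hla.mul hphi1
  have hD2 := hpla.mul hphi2
  have htot := (hC.sub hD1).sub hD2
  refine htot.congr_deriv ?_
  have heven : gphi (-l - x) = gphi (l + x) := by
    rw [show (-l - x : ℝ) = -(l + x) by ring, gphi_even]
  rw [heven]
  ring

lemma Fdj_even (l a : ℝ) : Fdj l (-a) = Fdj l a := by
  unfold Fdj
  rw [show (l - -a : ℝ) = l + a by ring, show (-l - -a : ℝ) = -(l - a) by ring,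
    show (l + -a : ℝ) = l - a by ring, show (-l - a : ℝ) = -(l + a) by ring, gG_neg, gG_neg]
  ring

lemma Fdj_le (l : ℝ) (hl : 0 ≤ l) (a : ℝ) : Fdj l a ≤ Fdj l 0 := by
  have key : ∀ b : ℝ, 0 ≤ b → Fdj l b ≤ Fdj l 0 := by
    intro b hb
    have hanti : AntitoneOn (Fdj l) (Icc 0 b) := by
      refine antitoneOn_of_deriv_nonpos (convex_Icc 0 b)
        (fun x _ => ((hasDerivAt_Fdj l x).differentiableAt.continuousAt).continuousWithinAt)
        (fun x _ => (hasDerivAt_Fdj l x).differentiableAt.differentiableWithinAt)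
        (fun x hx => ?_)
      rw [interior_Icc] at hx
      rw [(hasDerivAt_Fdj l x).deriv]
      have h1 : gG (l - x) - gG (-l - x) ≤ 1 := by
        rw [gG_sub]
        exact intervalIntegral_gphi_le_one _ _ (by linarith)
      have hx0 : 0 < x := hx.1
      nlinarith
    exact hanti (left_mem_Icc.mpr hb) (mem_Icc.mpr ⟨hb, le_rfl⟩) hb
  rcases le_or_gt 0 a with h | h
  · exact key a h
  · calc Fdj l a = Fdj l (-(-a)) := by norm_num
      _ = Fdj l (-a) := Fdj_even l (-a)
      _ ≤ Fdj l 0 := key (-a) (by linarith)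

lemma Fdj_zero_le (l : ℝ) (hl : 0 ≤ l) : Fdj l 0 ≤ (1 + l ^ 2) * Real.exp (-l ^ 2 / 2) := by
  have h0 : Fdj l 0 = (1 + l ^ 2) * (1 - 2 * gG l) - 2 * l * gphi l := by
    unfold Fdj
    rw [show (l - (0:ℝ)) = l by ring, show (-l - (0:ℝ)) = -l by ring,
      show (l + (0:ℝ)) = l by ring, gG_neg]
    ring
  rw [h0, gG_split l hl]
  have h1 := gQ_le l hl
  have h2 := gphi_nonneg l
  have h3 : (0:ℝ) < 1 + l ^ 2 := by positivity
  nlinarith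

/-- Donoho–Johnstone pointwise bound: for `Z ~ N(0,1)`, `a ∈ ℝ`, `λ ≥ 0`,
`1 + E[(Z+a)² ∧ λ²] − 2 P(|Z+a| ≤ λ) ≤ (1+λ²)(e^{−λ²/2} + a²)`. -/
theorem soft_threshold_pointwise_risk_bound (a l : ℝ) (hl : 0 ≤ l) :
    1 + (∫ z, min ((z + a) ^ 2) (l ^ 2) ∂(gaussianReal 0 1))
      - 2 * ((gaussianReal 0 1) {z | |z + a| ≤ l}).toReal
    ≤ (1 + l ^ 2) * (Real.exp (-l ^ 2 / 2) + a ^ 2) := by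
  have hset : {z : ℝ | |z + a| ≤ l} = Set.Icc (-l - a) (l - a) := by
    ext z
    simp only [Set.mem_setOf_eq, Set.mem_Icc, abs_le]
    constructor <;> intro h <;> exact ⟨by linarith [h.1], by linarith [h.2]⟩
  have e1 : ∫ z, min ((z + a) ^ 2) (l ^ 2) ∂(gaussianReal 0 1)
      = ∫ z, gphi z * min ((z + a) ^ 2) (l ^ 2) := integral_gaussianReal_eq _
  have e2 : ((gaussianReal 0 1) {z | |z + a| ≤ l}).toReal
      = ∫ z in Set.Icc (-l - a) (l - a), gphi z := by
    rw [hset]; exact gaussianReal_prob_eq _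
  rw [e1, e2]
  have e3 := combined a l hl
  have h1 := Fdj_le l hl a
  have h2 := Fdj_zero_le l hl
  nlinarith [sq_nonneg (l * a), Real.exp_pos (-l ^ 2 / 2)]
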